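/- Let X be a nonempty finite chain in a partially ordered set S, and let X* = X ∖ {max X}. Then X* is the maximum, in the lexicographic order, of the set of finite chains X' in S satisfying X' < X and max X' < max X. -/
import Mathlib


/-- The lexicographic order on finite chains in a poset `S`:
`X ≤ Y` iff `min (Y \ X) ≤ min (X \ Y)`, with the convention `max ∅ < x < min ∅`. -/
def lexLE {S : Type*} [PartialOrder S] [DecidableEq S] (X Y : Finset S) : Prop :=
  X \ Y = ∅ ∨ ∃ b ∈ Y \ X, ∀ a ∈ X \ Y, b ≤ a

def lexLT {S : Type*} [PartialOrder S] [DecidableEq S] (X Y : Finset S) : Prop :=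
  lexLE X Y ∧ ¬ lexLE Y X

/-- For a nonempty finite chain `X` with maximal element `m`, the chain
`X* = X \ {max X}` is the maximum (in the lexicographic order) of the set of finite
chains `X'` with `X' < X` and `max X' < max X` (the latter meaning every element of
`X'` is `< m`, with the convention `max ∅ < m`). -/
theorem erase_max_is_max_of_smaller_chains {S : Type*} [PartialOrder S] [DecidableEq S]
    (X : Finset S) (hX : IsChain (· ≤ ·) (X : Set S)) (m : S) (hm : m ∈ X)
    (hmax : ∀ a ∈ X, a ≤ m) :
    (lexLT (X.erase m) X ∧ ∀ a ∈ X.erase m, a < m) ∧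
    (∀ X' : Finset S, IsChain (· ≤ ·) (X' : Set S) → lexLT X' X → (∀ a ∈ X', a < m) →
      lexLE X' (X.erase m)) := by
  have herase : X.erase m \ X = ∅ := by
    ext a; simp only [Finset.mem_sdiff, Finset.mem_erase, Finset.notMem_empty, iff_false]
    tauto
  constructor
  · refine ⟨⟨Or.inl herase, ?_⟩, ?_⟩
    · rintro (h | ⟨b, hb, hba⟩)
      · have : m ∈ X \ X.erase m := by simp [hm]
        rw [h] at this; exact absurd this (Finset.notMem_empty m)
      · rw [herase] at hb; exact Finset.notMem_empty b hb
    · intro a ha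
      rw [Finset.mem_erase] at ha
      exact lt_of_le_of_ne (hmax a ha.2) ha.1
  · intro X' _ ⟨hle, _⟩ hlt
    have hm' : m ∉ X' := fun h => lt_irrefl m (hlt m h)
    have hdiff : X' \ X.erase m = X' \ X := by
      ext a
      simp only [Finset.mem_sdiff, Finset.mem_erase]
      constructor
      · rintro ⟨ha, h2⟩
        refine ⟨ha, fun haX => h2 ⟨fun he => hm' (he ▸ ha), haX⟩⟩
      · rintro ⟨ha, h2⟩; exact ⟨ha, fun h => h2 h.2⟩
    rcases hle with h | ⟨b, hb, hba⟩
    · exact Or.inl (hdiff.trans h)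
    · rw [Finset.mem_sdiff] at hb
      by_cases hne : X' \ X = ∅
      · exact Or.inl (hdiff.trans hne)
      · obtain ⟨a, ha⟩ := Finset.nonempty_iff_ne_empty.2 hne
        have hbm : b ≠ m := by
          intro h; subst h
          have := hba a ha
          rw [Finset.mem_sdiff] at ha
          exact lt_irrefl a (lt_of_lt_of_le (hlt a ha.1) this)
        refine Or.inr ⟨b, ?_, ?_⟩
        · rw [Finset.mem_sdiff, Finset.mem_erase]; exact ⟨⟨hbm, hb.1⟩, hb.2⟩
        · intro a' ha'; exact hba a' (hdiff ▸ ha')
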